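/- If f is an algebraic function over K = C(x) with minimal polynomial m = (y − f₁)⋯(y − f_d) (f₁,…,f_d the conjugates of f in an algebraic closure), and f is a solution of L ∈ K[D], then for each i, the i-th coefficient of m, being (up to sign) the (d−i)-th elementary symmetric polynomial in f₁,…,f_d, is annihilated by the symmetric power L^{⊗(d−i)}; since it lies in K, it is a rational solution of L^{⊗(d−i)}. -/

import Mathlib

/- Framework: linear differential operators over K = C(x), represented as
   `Polynomial (RatFunc C)` where `X^i` stands for `D^i` (coefficients on the left);
   local (Puiseux/Hahn series) solutions at finite points and at infinity;
   integrality; constants and pseudoconstants of `K[D]/⟨L⟩`. -/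

noncomputable section
open Polynomial

variable (C : Type) [Field C] [IsAlgClosed C] [CharZero C]

/-- The derivative d/dx on K = C(x). -/
def KDeriv (r : RatFunc C) : RatFunc C :=
  (algebraMap (Polynomial C) (RatFunc C) (derivative r.num) * algebraMap _ _ r.denom
    - algebraMap _ _ r.num * algebraMap _ _ (derivative r.denom))
  / (algebraMap (Polynomial C) (RatFunc C) r.denom) ^ 2

/-- Linear differential operators `∑ aᵢ Dⁱ` with `aᵢ ∈ C(x)`, encoded as polynomials
    whose `i`-th coefficient is the coefficient of `Dⁱ`. -/
abbrev DOp := Polynomial (RatFunc C)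

/-- Left multiplication by `D` in `K[D]`: `D·(∑ aᵢ Dⁱ) = ∑ aᵢ Dⁱ⁺¹ + ∑ aᵢ' Dⁱ`. -/
def Dmul (P : DOp C) : DOp C :=
  X * P + P.sum fun i a => Polynomial.C (KDeriv C a) * X ^ i

/-- Multiplication (composition) in the noncommutative ring `K[D]`. -/
def opMul (P Q : DOp C) : DOp C :=
  P.sum fun i a => Polynomial.C a * (Dmul C)^[i] Q

/-- The adjoint `L ↦ L*`: `(∑ aᵢ Dⁱ)* = ∑ (−D)ⁱ aᵢ`. -/
def adjoint (L : DOp C) : DOp C :=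
  L.sum fun i a => (-1) ^ i * (Dmul C)^[i] (Polynomial.C a)

/-- Application of an operator to an element of `K` itself (rational solutions). -/
def KApply (L : DOp C) (q : RatFunc C) : RatFunc C :=
  L.sum fun i a => a * (KDeriv C)^[i] q

/-- `[P]_L` is zero in `K[D]/⟨L⟩`, i.e. `P` is a left multiple of `L`. -/
def IsZeroClass (L P : DOp C) : Prop := ∃ Q : DOp C, P = opMul C Q L

/-- `[P]_L` is a constant of `K[D]/⟨L⟩`, i.e. `D·[P]_L = [0]_L`. -/
def IsConstantClass (L P : DOp C) : Prop := ∃ Q : DOp C, Dmul C P = opMul C Q L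

/-- `N = lclm(L, M)`: the monic common left multiple of `L` and `M` of lowest order. -/
def IsLCLM (L M N : DOp C) : Prop :=
  N.Monic ∧ (∃ A, N = opMul C A L) ∧ (∃ B, N = opMul C B M) ∧
    ∀ N' : DOp C, N'.Monic → (∃ A, N' = opMul C A L) → (∃ B, N' = opMul C B M) →
      N.natDegree ≤ N'.natDegree

/-- A differential field extension of `K = C(x)`. -/
structure DiffExt where
  carrier : Type
  [isField : Field carrier]
  [isAlgK : Algebra (RatFunc C) carrier]
  [isAlgC : Algebra C carrier]
  [isTower : IsScalarTower C (RatFunc C) carrier]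
  δ : carrier → carrier
  δ_add : ∀ a b, δ (a + b) = δ a + δ b
  δ_mul : ∀ a b, δ (a * b) = a * δ b + δ a * b
  δ_algebraMap : ∀ r : RatFunc C,
    δ (algebraMap (RatFunc C) carrier r) = algebraMap (RatFunc C) carrier (KDeriv C r)

attribute [instance] DiffExt.isField DiffExt.isAlgK DiffExt.isAlgC DiffExt.isTower

/-- Application of an operator `L = ∑ aᵢ Dⁱ` to an element of a differential extension. -/
def DiffExt.apply (F : DiffExt C) (L : DOp C) (f : F.carrier) : F.carrier :=
  L.sum fun i a => algebraMap (RatFunc C) F.carrier a * F.δ^[i] f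

/-- Formal derivative `d/dt` on generalized (Hahn/Puiseux) series with rational exponents. -/
def hderiv (f : HahnSeries ℚ C) : HahnSeries ℚ C :=
  HahnSeries.embDomain (OrderIso.addRight (-1 : ℚ)).toOrderEmbedding
    { coeff := fun γ => γ • f.coeff γ,
      isPWO_support' := f.isPWO_support.mono (by
        intro γ hγ
        simp only [Function.mem_support, ne_eq] at hγ ⊢
        intro hc
        exact hγ (by rw [hc, smul_zero]) ) }

/-- The derivation `d/dx = -t² d/dt` on series at infinity, in the local coordinate `t = 1/x`. -/
def dinf (f : HahnSeries ℚ C) : HahnSeries ℚ C :=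
  -(HahnSeries.single (2 : ℚ) (1 : C) * hderiv C f)

/-- `ι` is a series expansion of `C(x)` (at a finite point for `δ = hderiv`, at infinity
    for `δ = dinf`), i.e. a ring embedding compatible with differentiation. -/
def IsExpansion (δ : HahnSeries ℚ C → HahnSeries ℚ C)
    (ι : RatFunc C →+* HahnSeries ℚ C) : Prop :=
  ∀ r, ι (KDeriv C r) = δ (ι r)

/-- Application of an operator to a local series solution via the expansion `ι`. -/
def localApply (δ : HahnSeries ℚ C → HahnSeries ℚ C)
    (ι : RatFunc C →+* HahnSeries ℚ C) (L : DOp C) (f : HahnSeries ℚ C) : HahnSeries ℚ C :=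
  L.sum fun i a => ι a * δ^[i] f

/-- A series is integral if it has no pole, i.e. all exponents are ≥ 0. -/
def IntegralSeries (f : HahnSeries ℚ C) : Prop := ∀ γ < (0 : ℚ), f.coeff γ = 0

/-- `[P]_L` is completely integral: at every point of `C ∪ {∞}` and every local series
    solution `f` of `L` there, `P·f` has no pole. -/
def CompletelyIntegral (L P : DOp C) : Prop :=
  ∀ δ ∈ ({hderiv C, dinf C} : Set (HahnSeries ℚ C → HahnSeries ℚ C)),
    ∀ ι : RatFunc C →+* HahnSeries ℚ C, IsExpansion C δ ι →
      ∀ f : HahnSeries ℚ C, localApply C δ ι L f = 0 →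
        IntegralSeries C (localApply C δ ι P f)

/-- A pseudoconstant of `L`: a completely integral element of `K[D]/⟨L⟩` that is not
    a constant. -/
def IsPseudoconstant (L P : DOp C) : Prop :=
  CompletelyIntegral C L P ∧ ¬ IsConstantClass C L P

def HasPseudoconstant (L : DOp C) : Prop := ∃ P : DOp C, IsPseudoconstant C L P

/-- `S` is the `s`-th symmetric power of `L`: the monic operator of minimal order
    annihilating all products of `s` solutions of `L`. -/
def IsSymPow (L S : DOp C) (s : ℕ) : Prop :=
  S.Monic ∧
  (∀ F : DiffExt C, ∀ f : Fin s → F.carrier,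
      (∀ i, F.apply C L (f i) = 0) → F.apply C S (∏ i, f i) = 0) ∧
  (∀ S' : DOp C, S'.Monic →
      (∀ F : DiffExt C, ∀ f : Fin s → F.carrier,
        (∀ i, F.apply C L (f i) = 0) → F.apply C S' (∏ i, f i) = 0) →
      S.natDegree ≤ S'.natDegree)

/-- `L` has only algebraic solutions: there is an algebraic differential extension of `K`
    in which the solution space of `L` has dimension `ord L`. -/
def AllAlgebraic (L : DOp C) : Prop :=
  ∃ F : DiffExt C, Algebra.IsAlgebraic (RatFunc C) F.carrier ∧
    ∃ b : Fin L.natDegree → F.carrier,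
      (∀ i, F.apply C L (b i) = 0) ∧ LinearIndependent C b

/-! ### Auxiliary lemmas -/

section Aux

variable {C}

lemma kderiv_div' (p q : Polynomial C) (hq : q ≠ 0) :
    KDeriv C (algebraMap (Polynomial C) (RatFunc C) p / algebraMap (Polynomial C) (RatFunc C) q) =
      (algebraMap (Polynomial C) (RatFunc C) (derivative p)
          * algebraMap (Polynomial C) (RatFunc C) q
        - algebraMap (Polynomial C) (RatFunc C) p
          * algebraMap (Polynomial C) (RatFunc C) (derivative q))
      / (algebraMap (Polynomial C) (RatFunc C) q) ^ 2 := by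
  set ι := algebraMap (Polynomial C) (RatFunc C) with hι
  set r := ι p / ι q with hr
  have hqz : ι q ≠ 0 := RatFunc.algebraMap_ne_zero hq
  have hdz : ι r.denom ≠ 0 := RatFunc.algebraMap_ne_zero r.denom_ne_zero
  have key : ι p / ι q = ι r.num / ι r.denom := by rw [RatFunc.num_div_denom]
  rw [div_eq_div_iff hqz hdz] at key
  have h1p : p * r.denom = r.num * q := by
    apply RatFunc.algebraMap_injective C
    rw [map_mul, map_mul]; exact key
  have h2p := congrArg derivative h1p
  rw [derivative_mul, derivative_mul] at h2p
  have h2 : ι (derivative p) * ι r.denom + ι p * ι (derivative r.denom)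
      = ι (derivative r.num) * ι q + ι r.num * ι (derivative q) := by
    have := congrArg ι h2p
    simpa only [map_add, map_mul] using this
  have hKD : KDeriv C r
      = (ι (derivative r.num) * ι r.denom - ι r.num * ι (derivative r.denom)) / ι r.denom ^ 2 :=
    rfl
  rw [hKD, div_eq_div_iff (pow_ne_zero 2 hdz) (pow_ne_zero 2 hqz)]
  linear_combination (ι (derivative q) * ι r.denom + ι (derivative r.denom) * ι q) * key
    - ι q * ι r.denom * h2

lemma kderiv_add' (r s : RatFunc C) : KDeriv C (r + s) = KDeriv C r + KDeriv C s := by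
  set ι := algebraMap (Polynomial C) (RatFunc C) with hι
  have hr := RatFunc.num_div_denom r
  have hs := RatFunc.num_div_denom s
  have hrd : ι r.denom ≠ 0 := RatFunc.algebraMap_ne_zero r.denom_ne_zero
  have hsd : ι s.denom ≠ 0 := RatFunc.algebraMap_ne_zero s.denom_ne_zero
  have hr' : r * ι r.denom = ι r.num := ((div_eq_iff hrd).mp hr).symm
  have hs' : s * ι s.denom = ι s.num := ((div_eq_iff hsd).mp hs).symm
  have hadd : r + s = ι (r.num * s.denom + s.num * r.denom) / ι (r.denom * s.denom) := by
    rw [map_add, map_mul, map_mul, map_mul, eq_div_iff (mul_ne_zero hrd hsd)]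
    linear_combination ι s.denom * hr' + ι r.denom * hs'
  rw [hadd, kderiv_div' _ _ (mul_ne_zero r.denom_ne_zero s.denom_ne_zero)]
  have hKr : KDeriv C r
      = (ι (derivative r.num) * ι r.denom - ι r.num * ι (derivative r.denom)) / ι r.denom ^ 2 :=
    rfl
  have hKs : KDeriv C s
      = (ι (derivative s.num) * ι s.denom - ι s.num * ι (derivative s.denom)) / ι s.denom ^ 2 :=
    rfl
  rw [hKr, hKs]
  simp only [derivative_add, derivative_mul, map_add, map_mul]
  simp only [hι] at hrd hsd ⊢
  field_simp
  ring

lemma kderiv_zero' : KDeriv C (0 : RatFunc C) = 0 := by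
  have h := kderiv_add' (0 : RatFunc C) 0
  rw [add_zero] at h
  exact (left_eq_add.mp h)

/-- Coefficientwise derivative of a polynomial over `K`. -/
def pd (P : Polynomial (RatFunc C)) : Polynomial (RatFunc C) :=
  P.sum fun i a => Polynomial.C (KDeriv C a) * X ^ i

lemma pd_monomial (n : ℕ) (a : RatFunc C) :
    pd (monomial n a) = Polynomial.C (KDeriv C a) * X ^ n :=
  Polynomial.sum_monomial_index a _ (by simp [kderiv_zero'])

lemma pd_add (P Q : Polynomial (RatFunc C)) : pd (P + Q) = pd P + pd Q :=
  Polynomial.sum_add_index P Q _ (fun _ => by simp [kderiv_zero'])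
    (fun i a b => by rw [kderiv_add', map_add]; ring)

instance : CharZero (RatFunc C) :=
  charZero_of_injective_algebraMap (algebraMap C (RatFunc C)).injective

lemma dz (F : DiffExt C) : F.δ 0 = 0 := by
  have h := F.δ_add 0 0
  rw [add_zero] at h
  exact left_eq_add.mp h

lemma done (F : DiffExt C) : F.δ 1 = 0 := by
  have h := F.δ_mul 1 1
  simp only [mul_one, one_mul] at h
  exact left_eq_add.mp h

lemma d_pow (F : DiffExt C) (g : F.carrier) (n : ℕ) :
    F.δ (g ^ (n + 1)) = ((n : F.carrier) + 1) * g ^ n * F.δ g := by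
  induction n with
  | zero => simp [pow_one]
  | succ k ih =>
    have h : g ^ (k + 2) = g * g ^ (k + 1) := by ring
    rw [h, F.δ_mul, ih]
    push_cast
    ring

lemma d_aeval (F : DiffExt C) (g : F.carrier) (P : Polynomial (RatFunc C)) :
    F.δ (aeval g P) = aeval g (pd P) + aeval g (derivative P) * F.δ g := by
  induction P using Polynomial.induction_on' with
  | add p q hp hq =>
    rw [map_add, F.δ_add, hp, hq, pd_add, map_add, derivative_add, map_add]
    ring
  | monomial n a =>
    rw [pd_monomial, aeval_monomial, derivative_monomial]
    cases n with
    | zero =>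
      simp [F.δ_mul, done F, F.δ_algebraMap]
    | succ k =>
      rw [F.δ_mul, d_pow F g k, F.δ_algebraMap]
      simp only [map_mul, aeval_C, aeval_X, map_pow, aeval_monomial, map_natCast,
        Nat.add_sub_cancel, map_add, map_one]
      push_cast
      ring

/-- The universal polynomials expressing iterated derivatives of a root. -/
def Pseq (Cp : Polynomial (RatFunc C)) : ℕ → Polynomial (RatFunc C)
  | 0 => X
  | n + 1 => pd (Pseq Cp n) + derivative (Pseq Cp n) * Cp

lemma delta_root (F : DiffExt C) {m U V : Polynomial (RatFunc C)} {g : F.carrier}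
    (hroot : aeval g m = 0) (hUV : U * m + V * derivative m = 1) :
    F.δ g = aeval g (-(pd m) * V) := by
  have h0 : (0 : F.carrier) = aeval g (pd m) + aeval g (derivative m) * F.δ g := by
    rw [← d_aeval, hroot]
    exact (dz F).symm
  have hV : aeval g V * aeval g (derivative m) = 1 := by
    have h := congrArg (aeval g) hUV
    simp only [map_add, map_mul, hroot, mul_zero, zero_add, map_one] at h
    exact h
  calc F.δ g = (aeval g V * aeval g (derivative m)) * F.δ g := by rw [hV, one_mul]
    _ = aeval g V * (aeval g (derivative m) * F.δ g) := by ring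
    _ = aeval g V * (-aeval g (pd m)) := by
        congr 1
        linear_combination -h0
    _ = aeval g (-(pd m) * V) := by rw [map_mul, map_neg]; ring

lemma iterate_root (F : DiffExt C) {m U V : Polynomial (RatFunc C)} {g : F.carrier}
    (hroot : aeval g m = 0) (hUV : U * m + V * derivative m = 1) (n : ℕ) :
    F.δ^[n] g = aeval g (Pseq (-(pd m) * V) n) := by
  induction n with
  | zero => simp [Pseq]
  | succ k ih =>
    rw [Function.iterate_succ_apply', ih, d_aeval, delta_root F hroot hUV]
    show _ = aeval g (pd (Pseq (-(pd m) * V) k) + derivative (Pseq (-(pd m) * V) k) * (-(pd m) * V))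
    simp only [map_add, map_mul, map_neg]

lemma apply_eq_aeval (F : DiffExt C) {g : F.carrier} {Cp : Polynomial (RatFunc C)} (L : DOp C)
    (hiter : ∀ n, F.δ^[n] g = aeval g (Pseq Cp n)) :
    F.apply C L g = aeval g (L.sum fun i a => Polynomial.C a * Pseq Cp i) := by
  rw [DiffExt.apply, Polynomial.sum_def, Polynomial.sum_def, map_sum]
  refine Finset.sum_congr rfl fun n _ => ?_
  rw [map_mul, aeval_C, hiter n]

lemma iter_deriv_algebraMap (F : DiffExt C) (q : RatFunc C) (n : ℕ) :
    F.δ^[n] (algebraMap (RatFunc C) F.carrier q)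
      = algebraMap (RatFunc C) F.carrier ((KDeriv C)^[n] q) := by
  induction n with
  | zero => rfl
  | succ k ih =>
    rw [Function.iterate_succ_apply', ih, F.δ_algebraMap,
      Function.iterate_succ_apply' (KDeriv C) k q]

lemma apply_algebraMap (F : DiffExt C) (S : DOp C) (q : RatFunc C) :
    F.apply C S (algebraMap (RatFunc C) F.carrier q)
      = algebraMap (RatFunc C) F.carrier (KApply C S q) := by
  rw [DiffExt.apply, KApply, Polynomial.sum_def, Polynomial.sum_def, map_sum]
  exact Finset.sum_congr rfl fun n _ => by rw [iter_deriv_algebraMap, map_mul]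

lemma iter_add (F : DiffExt C) (n : ℕ) (x y : F.carrier) :
    F.δ^[n] (x + y) = F.δ^[n] x + F.δ^[n] y := by
  induction n with
  | zero => rfl
  | succ k ih =>
    rw [Function.iterate_succ_apply', ih, F.δ_add,
      Function.iterate_succ_apply' F.δ k x, Function.iterate_succ_apply' F.δ k y]

lemma iter_zero (F : DiffExt C) (n : ℕ) : F.δ^[n] (0 : F.carrier) = 0 := by
  induction n with
  | zero => rfl
  | succ k ih => rw [Function.iterate_succ_apply', ih, dz]

lemma apply_add (F : DiffExt C) (S : DOp C) (x y : F.carrier) :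
    F.apply C S (x + y) = F.apply C S x + F.apply C S y := by
  rw [DiffExt.apply, DiffExt.apply, DiffExt.apply, Polynomial.sum_def, Polynomial.sum_def,
    Polynomial.sum_def, ← Finset.sum_add_distrib]
  exact Finset.sum_congr rfl fun n _ => by rw [iter_add]; ring

lemma apply_zero (F : DiffExt C) (S : DOp C) : F.apply C S (0 : F.carrier) = 0 := by
  rw [DiffExt.apply, Polynomial.sum_def]
  exact Finset.sum_eq_zero fun n _ => by rw [iter_zero, mul_zero]

/-- `F.apply C S` as an additive monoid homomorphism. -/
def applyHom (F : DiffExt C) (S : DOp C) : F.carrier →+ F.carrier where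
  toFun := F.apply C S
  map_zero' := apply_zero F S
  map_add' := apply_add F S

end Aux

/-- The coefficients of the minimal polynomial of an algebraic solution `f` of `L`
(elementary symmetric functions of the conjugates) are rational solutions of the
symmetric powers `L^{⊗(d-i)}`. -/
theorem minpoly_coeff_rational_solution_of_sympow (F : DiffExt C) (L : DOp C)
    (f : F.carrier) (hf : F.apply C L f = 0)
    (halg : IsAlgebraic (RatFunc C) f)
    (d : ℕ) (hd : (minpoly (RatFunc C) f).natDegree = d)
    (conj : Fin d → F.carrier)
    (hsplit : (minpoly (RatFunc C) f).map (algebraMap (RatFunc C) F.carrier)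
        = ∏ i, (X - Polynomial.C (conj i))) :
    ∀ i ≤ d, ∀ S : DOp C, IsSymPow C L S (d - i) →
      KApply C S ((minpoly (RatFunc C) f).coeff i) = 0 := by
  intro i hi S hS
  set m := minpoly (RatFunc C) f with hm
  set ιF := algebraMap (RatFunc C) F.carrier with hιF
  have hint : IsIntegral (RatFunc C) f := halg.isIntegral
  have hirr : Irreducible m := minpoly.irreducible hint
  have hsep : m.Separable := hirr.separable
  obtain ⟨U, V, hUV⟩ := hsep
  set Cp : Polynomial (RatFunc C) := -(pd m) * V with hCp
  -- every root of `m` in `F` is annihilated by `L`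
  have hroots : ∀ g : F.carrier, aeval g m = 0 → F.apply C L g = 0 := by
    intro g hg
    have hfroot : aeval f m = 0 := minpoly.aeval (RatFunc C) f
    have hiterf : ∀ n, F.δ^[n] f = aeval f (Pseq Cp n) := iterate_root F hfroot hUV
    have hiterg : ∀ n, F.δ^[n] g = aeval g (Pseq Cp n) := iterate_root F hg hUV
    have hQf : aeval f (L.sum fun i a => Polynomial.C a * Pseq Cp i) = 0 := by
      rw [← apply_eq_aeval F L hiterf]; exact hf
    obtain ⟨W, hW⟩ := minpoly.dvd (RatFunc C) f hQf
    rw [apply_eq_aeval F L hiterg, hW, ← hm, map_mul, hg, zero_mul]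
  have hconj : ∀ j, F.apply C L (conj j) = 0 := by
    intro j
    apply hroots
    have haev : aeval (conj j) m = eval (conj j) (m.map ιF) := by
      rw [eval_map, aeval_def]
    rw [haev, hsplit, eval_prod]
    exact Finset.prod_eq_zero (Finset.mem_univ j) (by simp)
  -- Vieta: the coefficient is ± the elementary symmetric function of the conjugates
  have hcoeff : ιF (m.coeff i) = (-1 : F.carrier) ^ (d - i) *
      ∑ t ∈ Finset.univ.powersetCard (d - i), ∏ j ∈ t, conj j := by
    rw [← Polynomial.coeff_map, hsplit]
    have hprod : (∏ j : Fin d, (X - Polynomial.C (conj j)))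
        = ((Finset.univ.val.map conj).map fun t => X - Polynomial.C t).prod := by
      rw [Multiset.map_map, Finset.prod_eq_multiset_prod]
      rfl
    have hcardm : Multiset.card (Finset.univ.val.map conj) = d := by simp
    rw [hprod, Multiset.prod_X_sub_C_coeff _ (by rw [hcardm]; exact hi), hcardm,
      Finset.esymm_map_val]
  -- each product of `d - i` conjugates is annihilated by `S`
  have hprodzero : ∀ t ∈ Finset.univ.powersetCard (d - i),
      F.apply C S (∏ j ∈ t, conj j) = 0 := by
    intro t ht
    have htc : t.card = d - i := (Finset.mem_powersetCard.mp ht).2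
    set e := t.orderIsoOfFin htc with he
    have hpe : (∏ j ∈ t, conj j) = ∏ j : Fin (d - i), conj (e j) := by
      rw [← Finset.prod_coe_sort t conj]
      exact (Equiv.prod_comp e.toEquiv (fun x : t => conj x)).symm
    rw [hpe]
    exact hS.2.1 F (fun j => conj (e j)) (fun j => hconj _)
  have happly : F.apply C S (ιF (m.coeff i)) = 0 := by
    rw [hcoeff]
    have hsum : F.apply C S
        (∑ t ∈ Finset.univ.powersetCard (d - i), ∏ j ∈ t, conj j) = 0 := by
      have : F.apply C S = ⇑(applyHom F S) := rfl
      rw [this, map_sum]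
      exact Finset.sum_eq_zero hprodzero
    rcases Nat.even_or_odd (d - i) with he | ho
    · rw [he.neg_one_pow, one_mul]; exact hsum
    · rw [ho.neg_one_pow, neg_one_mul]
      have : F.apply C S = ⇑(applyHom F S) := rfl
      rw [this, map_neg]
      rw [← this, hsum, neg_zero]
  have hfin : ιF (KApply C S (m.coeff i)) = 0 := by
    rw [← apply_algebraMap F S (m.coeff i)]
    exact happly
  have hinj : Function.Injective ιF := (algebraMap (RatFunc C) F.carrier).injective
  apply hinj
  rw [hfin, map_zero]

end
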